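/- For any third order tensor A in R^{n1×r×r} with TriRank(A) = r̄, the rank of its mode-1 unfolding satisfies TucRank(A)₁ ≤ r̄²; consequently, if X = ABC is a triple decomposition of X with r = TriRank(X), then TucRank(X)₁ ≤ TriRank(X)². -/

import Mathlib

open Matrix

noncomputable def tripleProd {n1 n2 n3 r : ℕ}
    (A : Fin n1 → Fin r → Fin r → ℝ) (B : Fin r → Fin n2 → Fin r → ℝ)
    (C : Fin r → Fin r → Fin n3 → ℝ) : Fin n1 → Fin n2 → Fin n3 → ℝ :=
  fun i j t => ∑ p : Fin r, ∑ q : Fin r, ∑ s : Fin r, A i q s * B p j s * C p q t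

noncomputable def TriRank {n1 n2 n3 : ℕ} (X : Fin n1 → Fin n2 → Fin n3 → ℝ) : ℕ :=
  sInf {r : ℕ | ∃ (A : Fin n1 → Fin r → Fin r → ℝ) (B : Fin r → Fin n2 → Fin r → ℝ)
    (C : Fin r → Fin r → Fin n3 → ℝ), X = tripleProd A B C}

noncomputable def CPRank {n1 n2 n3 : ℕ} (X : Fin n1 → Fin n2 → Fin n3 → ℝ) : ℕ :=
  sInf {r : ℕ | ∃ (A : Fin n1 → Fin r → ℝ) (B : Fin n2 → Fin r → ℝ) (C : Fin n3 → Fin r → ℝ),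
    X = fun i j t => ∑ p : Fin r, A i p * B j p * C t p}

def mid (a b c : ℕ) : ℕ := max (min a b) (min (max a b) c)

noncomputable def mode1 {m' m n k : ℕ} (U : Matrix (Fin m') (Fin m) ℝ)
    (D : Fin m → Fin n → Fin k → ℝ) : Fin m' → Fin n → Fin k → ℝ :=
  fun i j t => ∑ p : Fin m, U i p * D p j t

noncomputable def mode2 {m n' n k : ℕ} (V : Matrix (Fin n') (Fin n) ℝ)
    (D : Fin m → Fin n → Fin k → ℝ) : Fin m → Fin n' → Fin k → ℝ :=
  fun i j t => ∑ q : Fin n, V j q * D i q t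

noncomputable def mode3 {m n k' k : ℕ} (W : Matrix (Fin k') (Fin k) ℝ)
    (D : Fin m → Fin n → Fin k → ℝ) : Fin m → Fin n → Fin k' → ℝ :=
  fun i j t => ∑ s : Fin k, W t s * D i j s

noncomputable def tucker {n1 n2 n3 r1 r2 r3 : ℕ} (U : Matrix (Fin n1) (Fin r1) ℝ)
    (V : Matrix (Fin n2) (Fin r2) ℝ) (W : Matrix (Fin n3) (Fin r3) ℝ)
    (D : Fin r1 → Fin r2 → Fin r3 → ℝ) : Fin n1 → Fin n2 → Fin n3 → ℝ :=
  mode1 U (mode2 V (mode3 W D))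

def unfold1 {a b c : ℕ} (T : Fin a → Fin b → Fin c → ℝ) : Matrix (Fin a) (Fin b × Fin c) ℝ :=
  fun i jt => T i jt.1 jt.2
def unfold2 {a b c : ℕ} (T : Fin a → Fin b → Fin c → ℝ) : Matrix (Fin b) (Fin a × Fin c) ℝ :=
  fun j it => T it.1 j it.2
def unfold3 {a b c : ℕ} (T : Fin a → Fin b → Fin c → ℝ) : Matrix (Fin c) (Fin a × Fin b) ℝ :=
  fun t ij => T ij.1 ij.2 t
lemma triSet_nonempty {n1 n2 n3 : ℕ} (X : Fin n1 → Fin n2 → Fin n3 → ℝ) :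
    {r : ℕ | ∃ (A : Fin n1 → Fin r → Fin r → ℝ) (B : Fin r → Fin n2 → Fin r → ℝ)
    (C : Fin r → Fin r → Fin n3 → ℝ), X = tripleProd A B C}.Nonempty := by
  classical
  set r := n2 * n3
  let e : Fin n2 × Fin n3 ≃ Fin (n2 * n3) := finProdFinEquiv
  refine ⟨r, fun i q s => if q = s then X i (e.symm q).1 (e.symm q).2 else 0,
    fun p j s => if p = s ∧ (e.symm p).1 = j then 1 else 0,
    fun p q t => if p = q ∧ (e.symm p).2 = t then 1 else 0, ?_⟩
  funext i j t
  simp only [tripleProd]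
  have : ∀ p : Fin r, (∑ q : Fin r, ∑ s : Fin r,
      (if q = s then X i (e.symm q).1 (e.symm q).2 else 0) *
      (if p = s ∧ (e.symm p).1 = j then (1:ℝ) else 0) *
      (if p = q ∧ (e.symm p).2 = t then 1 else 0)) =
      (if (e.symm p).1 = j ∧ (e.symm p).2 = t then X i (e.symm p).1 (e.symm p).2 else 0) := by
    intro p
    rw [Finset.sum_eq_single p, Finset.sum_eq_single p] <;>
      simp +contextual [and_comm] <;> aesop
  rw [Finset.sum_congr rfl fun p _ => this p]
  rw [e.symm.sum_comp (fun qt : Fin n2 × Fin n3 =>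
    if qt.1 = j ∧ qt.2 = t then X i qt.1 qt.2 else 0)]
  rw [Fintype.sum_prod_type]
  simp [Finset.sum_ite_eq', ite_and, Finset.sum_ite_eq]

lemma rank_unfold1_tripleProd {n1 n2 n3 r : ℕ} (A : Fin n1 → Fin r → Fin r → ℝ)
    (B : Fin r → Fin n2 → Fin r → ℝ) (C : Fin r → Fin r → Fin n3 → ℝ) :
    (unfold1 (tripleProd A B C)).rank ≤ r ^ 2 := by
  classical
  set L : Matrix (Fin n1) (Fin r × Fin r) ℝ := fun i qs => A i qs.1 qs.2 with hL
  set M : Matrix (Fin r × Fin r) (Fin n2 × Fin n3) ℝ :=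
    fun qs jt => ∑ p : Fin r, B p jt.1 qs.2 * C p qs.1 jt.2 with hM
  have hfac : unfold1 (tripleProd A B C) = L * M := by
    funext i jt
    rw [Matrix.mul_apply]
    simp only [unfold1, tripleProd, Matrix.mul_apply, Fintype.sum_prod_type,
      Finset.mul_sum, hL, hM]
    rw [Finset.sum_comm]
    congr 1; funext q
    rw [Finset.sum_comm]
    congr 1; funext s
    congr 1; funext p
    ring
  rw [hfac]
  calc _ ≤ L.rank := Matrix.rank_mul_le_left _ _
    _ ≤ Fintype.card (Fin r × Fin r) := Matrix.rank_le_card_width _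
    _ = r ^ 2 := by simp [sq]

theorem stmt11 :
    (∀ (n1 m k rb : ℕ) (A : Fin n1 → Fin m → Fin k → ℝ), TriRank A = rb →
      (unfold1 A).rank ≤ rb ^ 2) ∧
    (∀ (n1 n2 n3 r : ℕ) (X : Fin n1 → Fin n2 → Fin n3 → ℝ)
      (A : Fin n1 → Fin r → Fin r → ℝ) (B : Fin r → Fin n2 → Fin r → ℝ)
      (C : Fin r → Fin r → Fin n3 → ℝ), r = TriRank X → X = tripleProd A B C →
      (unfold1 X).rank ≤ TriRank X ^ 2) := by
  classical
  have main : ∀ (n1 m k rb : ℕ) (A : Fin n1 → Fin m → Fin k → ℝ), TriRank A = rb →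
      (unfold1 A).rank ≤ rb ^ 2 := by
    intro n1 m k rb A h
    obtain ⟨A', B', C', hX⟩ := Nat.sInf_mem (triSet_nonempty A)
    have : TriRank A = rb := h
    rw [hX, ← this]
    exact rank_unfold1_tripleProd A' B' C'
  exact ⟨main, fun n1 n2 n3 r X A B C _ _ => main _ _ _ _ X rfl⟩
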